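/- Let O be a nonempty closed convex subset of ℝ², and let Π : ℝ² → ℝ² be its metric projection, i.e. Π(x) ∈ O and ‖x − Π(x)‖ ≤ ‖x − y‖ for every y ∈ O (such a map exists and is unique, and is 1-Lipschitz). Let k, ε, r > 0, a ∈ {1, −1}, δ > 0, and let S = {x ∈ ℝ² : infDist(x, O) ≥ δ}. Define, for x ∈ S, n(x) = (x − Π(x))/‖x − Π(x)‖ and u(x) = k·((ε/2 + r − ‖x − Π(x)‖)·n(x) + a·(√3·ε/2)·(J n(x))). Then there exists L ≥ 0 such that u is Lipschitz on S with constant L. -/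

import Mathlib

open Metric
open scoped RealInnerProductSpace

/-- Counterclockwise rotation by π/2 in the Euclidean plane. -/
noncomputable def J (p : EuclideanSpace ℝ (Fin 2)) : EuclideanSpace ℝ (Fin 2) :=
  WithLp.toLp 2 ![-p 1, p 0]

lemma norm_J_sub (p q : EuclideanSpace ℝ (Fin 2)) : ‖J p - J q‖ = ‖p - q‖ := by
  rw [EuclideanSpace.norm_eq, EuclideanSpace.norm_eq]
  simp only [Fin.sum_univ_two, J, PiLp.sub_apply]
  simp only [PiLp.toLp_apply, Matrix.cons_val_zero, Matrix.cons_val_one]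
  simp only [Real.norm_eq_abs, sq_abs]
  congr 1
  ring

/-- normalization is Lipschitz away from 0 -/
lemma normalize_lip {E : Type*} [NormedAddCommGroup E] [NormedSpace ℝ E]
    {δ : ℝ} (hδ : 0 < δ) (x y : E) (hx : δ ≤ ‖x‖) (hy : δ ≤ ‖y‖) :
    ‖‖x‖⁻¹ • x - ‖y‖⁻¹ • y‖ ≤ 2 / δ * ‖x - y‖ := by
  have hxn : (0:ℝ) < ‖x‖ := lt_of_lt_of_le hδ hx
  have hyn : (0:ℝ) < ‖y‖ := lt_of_lt_of_le hδ hy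
  have key : ‖x‖⁻¹ • x - ‖y‖⁻¹ • y = ‖x‖⁻¹ • (x - y) + (‖x‖⁻¹ - ‖y‖⁻¹) • y := by
    rw [smul_sub, sub_smul]; abel
  rw [key]
  have h1 : ‖‖x‖⁻¹ • (x - y)‖ ≤ (1/δ) * ‖x - y‖ := by
    rw [norm_smul, Real.norm_eq_abs, abs_of_pos (inv_pos.2 hxn)]
    gcongr
    rw [inv_le_comm₀ hxn (by positivity)] -- ‖x‖⁻¹ ≤ 1/δ ↔ ...
    simpa using hx
  have h2 : ‖(‖x‖⁻¹ - ‖y‖⁻¹) • y‖ ≤ (1/δ) * ‖x - y‖ := by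
    rw [norm_smul, Real.norm_eq_abs]
    have heq : ‖x‖⁻¹ - ‖y‖⁻¹ = (‖y‖ - ‖x‖) / (‖x‖ * ‖y‖) := by
      field_simp
    have : |‖x‖⁻¹ - ‖y‖⁻¹| = |‖y‖ - ‖x‖| / (‖x‖ * ‖y‖) := by
      rw [heq, abs_div, abs_of_pos (show (0:ℝ) < ‖x‖ * ‖y‖ by positivity)]
    rw [this]
    have hb : |‖y‖ - ‖x‖| ≤ ‖x - y‖ := by
      rw [abs_sub_comm]
      exact abs_norm_sub_norm_le x y
    calc |‖y‖ - ‖x‖| / (‖x‖ * ‖y‖) * ‖y‖ = |‖y‖ - ‖x‖| / ‖x‖ := by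
          field_simp
      _ ≤ ‖x - y‖ / δ := by
          apply div_le_div₀ (norm_nonneg _) hb hδ hx
      _ = 1/δ * ‖x - y‖ := by ring
  calc ‖‖x‖⁻¹ • (x - y) + (‖x‖⁻¹ - ‖y‖⁻¹) • y‖
      ≤ ‖‖x‖⁻¹ • (x - y)‖ + ‖(‖x‖⁻¹ - ‖y‖⁻¹) • y‖ := norm_add_le _ _
    _ ≤ (1/δ) * ‖x - y‖ + (1/δ) * ‖x - y‖ := add_le_add h1 h2
    _ = 2 / δ * ‖x - y‖ := by ring

/-- Proposition 1(i)–(ii) regularity claim: away from the obstacle (at distance at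
least δ > 0), the wall-following vector field is Lipschitz continuous. -/
theorem wall_following_law_lipschitz
    (O : Set (EuclideanSpace ℝ (Fin 2))) (hO : O.Nonempty)
    (hOc : IsClosed O) (hOconv : Convex ℝ O)
    (proj : EuclideanSpace ℝ (Fin 2) → EuclideanSpace ℝ (Fin 2))
    (hprojmem : ∀ x, proj x ∈ O)
    (hprojnear : ∀ x, ∀ y ∈ O, ‖x - proj x‖ ≤ ‖x - y‖)
    (k ε r δ : ℝ) (hk : 0 < k) (hε : 0 < ε) (hr : 0 < r) (hδ : 0 < δ)
    (a : ℝ) (ha : a = 1 ∨ a = -1)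
    (S : Set (EuclideanSpace ℝ (Fin 2)))
    (hS : S = {x | δ ≤ infDist x O})
    (n u : EuclideanSpace ℝ (Fin 2) → EuclideanSpace ℝ (Fin 2))
    (hn : ∀ x ∈ S, n x = ‖x - proj x‖⁻¹ • (x - proj x))
    (hu : ∀ x ∈ S, u x = k • ((ε / 2 + r - ‖x - proj x‖) • n x +
      (a * (Real.sqrt 3 * ε / 2)) • J (n x))) :
    ∃ L : NNReal, LipschitzOnWith L u S := by
  -- variational inequality
  have vi : ∀ x, ∀ w ∈ O, (inner ℝ (x - proj x) (w - proj x) : ℝ) ≤ 0 := by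
    intro x
    have hmem := hprojmem x
    have : Nonempty O := ⟨⟨proj x, hmem⟩⟩
    refine (norm_eq_iInf_iff_real_inner_le_zero hOconv hmem).mp ?_
    apply le_antisymm
    · exact le_ciInf fun w => hprojnear x w w.2
    · have hbdd : BddBelow (Set.range fun w : O => ‖x - (w : EuclideanSpace ℝ (Fin 2))‖) := by
        refine ⟨0, ?_⟩
        rintro _ ⟨w, rfl⟩
        exact norm_nonneg _
      simpa using ciInf_le hbdd (⟨proj x, hmem⟩ : O)
  -- proj is 1-Lipschitz
  have projlip : ∀ x y, ‖proj x - proj y‖ ≤ ‖x - y‖ := by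
    intro x y
    have h1 := vi x (proj y) (hprojmem y)
    have h2 := vi y (proj x) (hprojmem x)
    set p := proj x - proj y with hp
    have key : ‖p‖ ^ 2 ≤ (inner ℝ (x - y) p : ℝ) := by
      have e1 : (inner ℝ (x - proj x) (-p) : ℝ) ≤ 0 := by
        have hq : proj y - proj x = -p := by rw [hp]; abel
        rw [← hq]; exact h1
      have a1 : (0:ℝ) ≤ inner ℝ (x - proj x) p := by
        rw [inner_neg_right] at e1; linarith
      have expand : (inner ℝ (x - y) p : ℝ) - ‖p‖ ^ 2
          = (inner ℝ (x - proj x) p : ℝ) - (inner ℝ (y - proj y) p : ℝ) := by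
        have hxy : x - y = (x - proj x) - (y - proj y) + p := by rw [hp]; abel
        rw [hxy, inner_add_left, inner_sub_left, real_inner_self_eq_norm_sq]
        ring
      linarith
    have := key.trans (real_inner_le_norm (x - y) p)
    rcases eq_or_lt_of_le (norm_nonneg p) with h0 | h0
    · rw [← h0]; positivity
    · nlinarith
  -- distance to projection equals infDist, so ≥ δ on S
  have hdist : ∀ x ∈ S, δ ≤ ‖x - proj x‖ := by
    intro x hx
    rw [hS] at hx
    calc δ ≤ infDist x O := hx
      _ ≤ dist x (proj x) := infDist_le_dist_of_mem (hprojmem x)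
      _ = ‖x - proj x‖ := dist_eq_norm _ _
  set c : ℝ := ε / 2 + r with hc
  set b : ℝ := a * (Real.sqrt 3 * ε / 2) with hb
  set C : ℝ := k * ((|c| + |b|) * (4 / δ) + 2) with hC
  have hCpos : 0 ≤ C := by
    have : (0:ℝ) ≤ (|c| + |b|) * (4/δ) := by positivity
    nlinarith
  refine ⟨Real.toNNReal C, LipschitzOnWith.of_dist_le_mul ?_⟩
  intro x hx y hy
  rw [Real.coe_toNNReal C hCpos, dist_eq_norm, dist_eq_norm]
  set fx := x - proj x with hfx
  set fy := y - proj y with hfy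
  have hdx : δ ≤ ‖fx‖ := hdist x hx
  have hdy : δ ≤ ‖fy‖ := hdist y hy
  have hxne : ‖fx‖ ≠ 0 := ne_of_gt (lt_of_lt_of_le hδ hdx)
  have hyne : ‖fy‖ ≠ 0 := ne_of_gt (lt_of_lt_of_le hδ hdy)
  -- rewrite u
  have hux : u x = k • (c • n x - fx + b • J (n x)) := by
    rw [hu x hx]
    congr 1
    rw [sub_smul]
    congr 2
    rw [hn x hx, smul_smul, mul_inv_cancel₀ hxne, one_smul]
  have huy : u y = k • (c • n y - fy + b • J (n y)) := by
    rw [hu y hy]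
    congr 1
    rw [sub_smul]
    congr 2
    rw [hn y hy, smul_smul, mul_inv_cancel₀ hyne, one_smul]
  have hsplit : u x - u y
      = k • (c • (n x - n y) - (fx - fy) + b • (J (n x) - J (n y))) := by
    rw [hux, huy]
    rw [← smul_sub]
    congr 1
    rw [smul_sub, smul_sub]
    abel
  rw [hsplit, norm_smul, Real.norm_eq_abs, abs_of_pos hk]
  -- bounds
  have hnlip : ‖n x - n y‖ ≤ 2/δ * ‖fx - fy‖ := by
    rw [hn x hx, hn y hy]
    exact normalize_lip hδ fx fy hdx hdy
  have hflip : ‖fx - fy‖ ≤ 2 * ‖x - y‖ := by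
    have : fx - fy = (x - y) - (proj x - proj y) := by rw [hfx, hfy]; abel
    rw [this]
    calc ‖(x - y) - (proj x - proj y)‖ ≤ ‖x - y‖ + ‖proj x - proj y‖ := norm_sub_le _ _
      _ ≤ ‖x - y‖ + ‖x - y‖ := by have := projlip x y; linarith
      _ = 2 * ‖x - y‖ := by ring
  have hJ : ‖J (n x) - J (n y)‖ = ‖n x - n y‖ := norm_J_sub _ _
  have tri : ‖c • (n x - n y) - (fx - fy) + b • (J (n x) - J (n y))‖
      ≤ |c| * ‖n x - n y‖ + ‖fx - fy‖ + |b| * ‖n x - n y‖ := by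
    calc ‖c • (n x - n y) - (fx - fy) + b • (J (n x) - J (n y))‖
        ≤ ‖c • (n x - n y) - (fx - fy)‖ + ‖b • (J (n x) - J (n y))‖ := norm_add_le _ _
      _ ≤ ‖c • (n x - n y)‖ + ‖fx - fy‖ + ‖b • (J (n x) - J (n y))‖ := by
          have := norm_sub_le (c • (n x - n y)) (fx - fy); linarith
      _ = |c| * ‖n x - n y‖ + ‖fx - fy‖ + |b| * ‖n x - n y‖ := by
          rw [norm_smul, norm_smul, Real.norm_eq_abs, Real.norm_eq_abs, hJ]
  have hnb : ‖n x - n y‖ ≤ 4/δ * ‖x - y‖ := by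
    calc ‖n x - n y‖ ≤ 2/δ * ‖fx - fy‖ := hnlip
      _ ≤ 2/δ * (2 * ‖x - y‖) := by
          apply mul_le_mul_of_nonneg_left hflip; positivity
      _ = 4/δ * ‖x - y‖ := by ring
  have final : ‖c • (n x - n y) - (fx - fy) + b • (J (n x) - J (n y))‖
      ≤ ((|c| + |b|) * (4/δ) + 2) * ‖x - y‖ := by
    calc ‖c • (n x - n y) - (fx - fy) + b • (J (n x) - J (n y))‖
        ≤ |c| * ‖n x - n y‖ + ‖fx - fy‖ + |b| * ‖n x - n y‖ := tri
      _ ≤ ((|c| + |b|) * (4/δ) + 2) * ‖x - y‖ := by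
          nlinarith [abs_nonneg c, abs_nonneg b, hnb, hflip, norm_nonneg (x - y)]
  calc k * ‖c • (n x - n y) - (fx - fy) + b • (J (n x) - J (n y))‖
      ≤ k * (((|c| + |b|) * (4/δ) + 2) * ‖x - y‖) := by
        apply mul_le_mul_of_nonneg_left final hk.le
    _ = C * ‖x - y‖ := by rw [hC]; ring
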